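/- arXiv:1705.03333 — 4 statements merged into one kernel-verified Lean document; each statement's English description precedes it below -/
import Mathlib

section
/- Let p in (1, infinity), lambda > 0 and x_0 in R. There is no twice continuously differentiable function u : [x_0, infinity) -> R such that the integral of |u(x)|^p over [x_0, infinity) is finite and u''(x) <= lambda * u(x) - 1/(2*lambda) for all x >= x_0. -/
open MeasureTheory Set

lemma aux_abs_le (p δ t : ℝ) (hp : 1 < p) (hδ : 0 < δ) : |t| ≤ δ + |t| ^ p * δ ^ (1 - p) := by
  rcases le_or_gt |t| δ with h | h
  · have h1 : 0 ≤ |t| ^ p * δ ^ (1 - p) :=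
      mul_nonneg (Real.rpow_nonneg (abs_nonneg t) p) (Real.rpow_nonneg hδ.le _)
    linarith
  · have ht : 0 < |t| := hδ.trans h
    have h2 : |t| ^ (1 - p) ≤ δ ^ (1 - p) :=
      Real.rpow_le_rpow_of_nonpos hδ h.le (by linarith)
    have h3 : |t| = |t| ^ p * |t| ^ (1 - p) := by
      rw [← Real.rpow_add ht]; norm_num
    have h4 : |t| ^ p * |t| ^ (1 - p) ≤ |t| ^ p * δ ^ (1 - p) :=
      mul_le_mul_of_nonneg_left h2 (Real.rpow_nonneg (abs_nonneg t) p)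
    linarith

/-- There is no `C²` function `u` on `[x₀, ∞)` with `∫_{x₀}^∞ |u|^p < ∞` satisfying the
differential inequality `u'' ≤ λ u - 1/(2λ)` on `[x₀, ∞)`. -/
theorem no_Lp_solution_of_diff_ineq (p : ℝ) (hp : 1 < p) (lam : ℝ) (hlam : 0 < lam)
    (x₀ : ℝ) :
    ¬ ∃ u : ℝ → ℝ,
        ContDiffOn ℝ 2 u (Ici x₀) ∧
        IntegrableOn (fun x => |u x| ^ p) (Ici x₀) volume ∧
        ∀ x ∈ Ici x₀,
          iteratedDerivWithin 2 u (Ici x₀) x ≤ lam * u x - 1 / (2 * lam) := by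
  rintro ⟨u, hu, hint, hineq⟩
  set c : ℝ := 1 / (2 * lam) with hc_def
  have hc : 0 < c := by positivity
  set δ : ℝ := c / (2 * lam) with hδ_def
  have hδ : 0 < δ := by positivity
  have hld : lam * δ = c / 2 := by
    field_simp [hδ_def]
    rw [hδ_def]
    field_simp
  set v : ℝ → ℝ := derivWithin u (Ici x₀) with hv_def
  set w : ℝ → ℝ := iteratedDerivWithin 2 u (Ici x₀) with hw_def
  set I : ℝ := ∫ x in Ici x₀, |u x| ^ p with hI_def
  have hI : 0 ≤ I := by
    apply setIntegral_nonneg measurableSet_Ici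
    intro x _
    exact Real.rpow_nonneg (abs_nonneg _) p
  have hucont : ContinuousOn u (Ici x₀) := hu.continuousOn
  have hv1 : ContDiffOn ℝ 1 v (Ici x₀) :=
    hu.derivWithin (uniqueDiffOn_Ici x₀) (by norm_num)
  have hvd : DifferentiableOn ℝ v (Ici x₀) := hv1.differentiableOn (by norm_num)
  have hvcont : ContinuousOn v (Ici x₀) := hv1.continuousOn
  have hwc : ContinuousOn w (Ici x₀) :=
    hu.continuousOn_iteratedDerivWithin (by norm_num) (uniqueDiffOn_Ici x₀)
  have hw_eq : ∀ x ∈ Ici x₀, HasDerivWithinAt v (w x) (Ici x₀) x := by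
    intro x hx
    have h1 : HasDerivWithinAt v (derivWithin v (Ici x₀) x) (Ici x₀) x :=
      (hvd x hx).hasDerivWithinAt
    have h2 : w x = derivWithin v (Ici x₀) x := by
      have hx' : UniqueDiffWithinAt ℝ (Ici x₀) x := (uniqueDiffOn_Ici x₀) x hx
      rw [hw_def]
      rw [show (2 : ℕ) = 1 + 1 from rfl, iteratedDerivWithin_succ]
      apply derivWithin_congr
      · intro y hy
        exact congrFun iteratedDerivWithin_one y
      · exact congrFun iteratedDerivWithin_one x
    rw [h2]
    exact h1
  clear_value c δ v w I
  -- main estimate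
  have key : ∀ s, x₀ ≤ s → v s ≤ v x₀ + lam * (δ ^ (1 - p) * I) - (c / 2) * (s - x₀) := by
    intro s hs
    have hIccsub : Icc x₀ s ⊆ Ici x₀ := Icc_subset_Ici_self
    have hwint : IntervalIntegrable w volume x₀ s :=
      (hwc.mono hIccsub).intervalIntegrable_of_Icc hs
    have hftc : ∫ y in x₀..s, w y = v s - v x₀ := by
      apply intervalIntegral.integral_eq_sub_of_hasDeriv_right_of_le hs
        (hvcont.mono hIccsub) _ hwint
      intro x hx
      have hx' : x ∈ Ici x₀ := le_of_lt hx.1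
      exact (hw_eq x hx').mono fun y hy => le_of_lt (lt_of_le_of_lt hx'.out hy)
    have huint : IntervalIntegrable u volume x₀ s :=
      (hucont.mono hIccsub).intervalIntegrable_of_Icc hs
    have hrhsint : IntervalIntegrable (fun y => lam * u y - c) volume x₀ s := by
      apply ContinuousOn.intervalIntegrable_of_Icc hs
      exact (continuousOn_const.mul (hucont.mono hIccsub)).sub continuousOn_const
    have h1 : ∫ y in x₀..s, w y ≤ ∫ y in x₀..s, (lam * u y - c) := by
      apply intervalIntegral.integral_mono_on hs hwint hrhsint
      intro x hx
      exact hineq x (hIccsub hx)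
    have h2 : ∫ y in x₀..s, (lam * u y - c) = lam * (∫ y in x₀..s, u y) - c * (s - x₀) := by
      rw [intervalIntegral.integral_sub (huint.const_mul lam) (intervalIntegrable_const),
        intervalIntegral.integral_const_mul, intervalIntegral.integral_const, smul_eq_mul]
      ring
    have habsc : ContinuousOn (fun y => |u y| ^ p) (Icc x₀ s) := by
      apply ContinuousOn.rpow_const ((hucont.mono hIccsub).abs)
      intro x _
      exact Or.inr (by linarith)
    have habsint : IntervalIntegrable (fun y => |u y| ^ p) volume x₀ s :=
      habsc.intervalIntegrable_of_Icc hs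
    have hrhs2int : IntervalIntegrable (fun y => δ + |u y| ^ p * δ ^ (1 - p)) volume x₀ s := by
      exact intervalIntegrable_const.add (habsint.mul_const _)
    have h3 : ∫ y in x₀..s, u y ≤ ∫ y in x₀..s, (δ + |u y| ^ p * δ ^ (1 - p)) := by
      apply intervalIntegral.integral_mono_on hs huint hrhs2int
      intro x _
      exact le_trans (le_abs_self _) (aux_abs_le p δ (u x) hp hδ)
    have h4 : ∫ y in x₀..s, (δ + |u y| ^ p * δ ^ (1 - p))
        = δ * (s - x₀) + (∫ y in x₀..s, |u y| ^ p) * δ ^ (1 - p) := by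
      rw [intervalIntegral.integral_add intervalIntegrable_const (habsint.mul_const _),
        intervalIntegral.integral_const, intervalIntegral.integral_mul_const, smul_eq_mul]
      ring
    have h5 : ∫ y in x₀..s, |u y| ^ p ≤ I := by
      rw [intervalIntegral.integral_of_le hs, hI_def]
      apply setIntegral_mono_set hint
      · filter_upwards with x using Real.rpow_nonneg (abs_nonneg _) p
      · exact HasSubset.Subset.eventuallyLE fun x hx => le_of_lt hx.1
    have hδp : (0:ℝ) ≤ δ ^ (1 - p) := Real.rpow_nonneg hδ.le _
    have h6 : lam * (∫ y in x₀..s, u y) ≤ lam * (δ * (s - x₀) + I * δ ^ (1 - p)) := by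
      apply mul_le_mul_of_nonneg_left _ hlam.le
      calc ∫ y in x₀..s, u y ≤ ∫ y in x₀..s, (δ + |u y| ^ p * δ ^ (1 - p)) := h3
        _ = δ * (s - x₀) + (∫ y in x₀..s, |u y| ^ p) * δ ^ (1 - p) := h4
        _ ≤ δ * (s - x₀) + I * δ ^ (1 - p) := by
            exact add_le_add_right (mul_le_mul_of_nonneg_right h5 hδp) _
    have hvs : v s - v x₀ ≤ lam * (δ * (s - x₀) + I * δ ^ (1 - p)) - c * (s - x₀) := by
      rw [← hftc]
      calc ∫ y in x₀..s, w y ≤ ∫ y in x₀..s, (lam * u y - c) := h1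
        _ = lam * (∫ y in x₀..s, u y) - c * (s - x₀) := h2
        _ ≤ lam * (δ * (s - x₀) + I * δ ^ (1 - p)) - c * (s - x₀) := by linarith
    have hexp : lam * (δ * (s - x₀) + I * δ ^ (1 - p))
        = (c / 2) * (s - x₀) + lam * (δ ^ (1 - p) * I) := by
      rw [mul_add, ← mul_assoc, hld]
      ring
    rw [hexp] at hvs
    linarith
  set B : ℝ := v x₀ + lam * (δ ^ (1 - p) * I) with hB_def
  set S : ℝ := max x₀ (x₀ + (2 / c) * (B + 1)) with hS_def
  have hS0 : x₀ ≤ S := le_max_left _ _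
  have hv_neg : ∀ s, S ≤ s → v s ≤ -1 := by
    intro s hs
    have hs0 : x₀ ≤ s := hS0.trans hs
    have h1 := key s hs0
    have h2 : x₀ + (2 / c) * (B + 1) ≤ s := (le_max_right _ _).trans hs
    have h3 : (c / 2) * ((2 / c) * (B + 1)) = B + 1 := by
      field_simp
    have h4 : (c / 2) * ((2 / c) * (B + 1)) ≤ (c / 2) * (s - x₀) := by
      apply mul_le_mul_of_nonneg_left (by linarith) (by positivity)
    rw [h3] at h4
    rw [hB_def] at h4
    linarith
  -- u is antitone beyond S (derivative ≤ -1), in fact u x + x is antitone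
  have hanti : AntitoneOn (fun x => u x + x) (Ici S) := by
    have hsub : Ici S ⊆ Ici x₀ := Ici_subset_Ici.mpr hS0
    have hcontg : ContinuousOn (fun x : ℝ => u x + x) (Ici S) :=
      (hucont.mono hsub).add continuousOn_id
    apply antitoneOn_of_deriv_nonpos (convex_Ici S) hcontg
    · rw [interior_Ici]
      intro x hx
      have hx0 : x₀ < x := lt_of_le_of_lt hS0 hx
      have hdiff : DifferentiableAt ℝ u x :=
        (hu.differentiableOn (by norm_num)).differentiableAt (Ici_mem_nhds hx0)
      exact (hdiff.add differentiableAt_id).differentiableWithinAt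
    · rw [interior_Ici]
      intro x hx
      have hx0 : x₀ < x := lt_of_le_of_lt hS0 hx
      have hdiff : DifferentiableAt ℝ u x :=
        (hu.differentiableOn (by norm_num)).differentiableAt (Ici_mem_nhds hx0)
      have hd : deriv (fun y => u y + y) x = deriv u x + 1 := by
        have := (hdiff.hasDerivAt.add (hasDerivAt_id x)).deriv
        exact this
      have hdx : deriv u x = v x := by
        rw [hv_def]
        exact (derivWithin_of_mem_nhds (Ici_mem_nhds hx0)).symm
      have := hv_neg x (le_of_lt hx)
      rw [hd, hdx]
      linarith
  set R : ℝ := max S (u S + S + 1) with hR_def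
  have hSR : S ≤ R := le_max_left _ _
  have hRx₀ : x₀ ≤ R := hS0.trans hSR
  have hu_neg : ∀ x, R ≤ x → u x ≤ -1 := by
    intro x hx
    have hSx : S ≤ x := hSR.trans hx
    have := hanti (self_mem_Ici) (mem_Ici.mpr hSx) hSx
    have h2 : u S + S + 1 ≤ x := (le_max_right _ _).trans hx
    simp only at this
    linarith
  have h1le : ∀ x ∈ Ici R, (1:ℝ) ≤ |u x| ^ p := by
    intro x hx
    have := hu_neg x hx
    have habs : 1 ≤ |u x| := by
      have : (1:ℝ) ≤ -(u x) := by linarith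
      exact this.trans (neg_le_abs _)
    exact Real.one_le_rpow habs (by linarith)
  have hconst : IntegrableOn (fun _ => (1:ℝ)) (Ici R) volume := by
    apply Integrable.mono' (hint.mono_set (Ici_subset_Ici.mpr hRx₀)) aestronglyMeasurable_const
    filter_upwards [ae_restrict_mem measurableSet_Ici] with x hx
    rw [norm_one]
    exact h1le x hx
  rw [integrableOn_const_iff] at hconst
  simp [Real.volume_Ici] at hconst
end

section
/- Let lambda > 0 and c in R, and define for x >= 1 the function u_2(x) = (1/(2*sqrt(lambda))) * integral over t in [x, infinity) of e^{sqrt(lambda)(x-t)} / t dt + (1/(2*sqrt(lambda))) * integral over t in [1, x] of e^{-sqrt(lambda)(x-t)} / t dt + c * e^{-sqrt(lambda) x}. Then x * u_2(x) converges to 1/lambda as x -> infinity. -/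
open MeasureTheory Set Filter Real Topology

private lemma xmu_base_val (s : ℝ) (hs : 0 < s) :
    ∫ u in Ici (0:ℝ), Real.exp (-(s*u)) = 1/s := by
  rw [integral_Ici_eq_integral_Ioi]
  have h := integral_comp_mul_left_Ioi (fun u => Real.exp (-u)) 0 hs
  simp only [mul_zero] at h
  simp only [← neg_mul] at h ⊢
  rw [h, integral_exp_neg_Ioi_zero, smul_eq_mul, mul_one, one_div]

private lemma xmu_base_int (s : ℝ) (hs : 0 < s) :
    IntegrableOn (fun u => Real.exp (-(s*u))) (Ici (0:ℝ)) := by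
  rw [integrableOn_Ici_iff_integrableOn_Ioi]
  simpa [neg_mul] using exp_neg_integrableOn_Ioi 0 hs

private lemma xmu_te_le_one (t : ℝ) : t * Real.exp (-t) ≤ 1 := by
  rw [Real.exp_neg]
  rw [mul_inv_le_iff₀ (Real.exp_pos t), one_mul]
  exact (Real.add_one_le_exp t).trans' (by linarith)

private lemma xmu_shift (x : ℝ) (f : ℝ → ℝ) :
    ∫ t in Ici x, f t = ∫ u in Ici 0, f (u + x) := by
  have h := (MeasurableEquiv.addRight x).measurableEmbedding.setIntegral_map
    (μ := volume) f (Ici x)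
  rw [show Measure.map (MeasurableEquiv.addRight x) volume = volume from
      (measurePreserving_add_right volume x).map_eq] at h
  rw [h]
  congr 1
  ext u
  simp [MeasurableEquiv.addRight]

private lemma xmu_reflect (x : ℝ) (f : ℝ → ℝ) :
    ∫ t in Icc 1 x, f t = ∫ u in Icc 0 (x-1), f (x - u) := by
  have h := (MeasurableEquiv.subLeft x).measurableEmbedding.setIntegral_map
    (μ := volume) f (Icc 1 x)
  rw [show Measure.map (MeasurableEquiv.subLeft x) volume = volume from
      (Measure.measurePreserving_sub_left volume x).map_eq] at h
  have hset : (⇑(MeasurableEquiv.subLeft x)) ⁻¹' Icc 1 x = Icc 0 (x-1) := by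
    ext u
    simp only [MeasurableEquiv.subLeft, MeasurableEquiv.coe_mk, Equiv.subLeft_apply,
      mem_preimage, mem_Icc]
    show 1 ≤ x - u ∧ x - u ≤ x ↔ 0 ≤ u ∧ u ≤ x - 1
    constructor <;> (rintro ⟨h1,h2⟩; constructor <;> linarith)
  have happ : ∀ u, (MeasurableEquiv.subLeft x) u = x - u := fun u => rfl
  rw [h, hset]
  simp only [happ]

private lemma xmu_tend1 (s : ℝ) (hs : 0 < s) :
    Tendsto (fun x : ℝ => ∫ u in Ici (0:ℝ), Real.exp (-(s*u)) * (x/(x+u)))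
      atTop (𝓝 (1/s)) := by
  rw [← xmu_base_val s hs]
  apply tendsto_integral_filter_of_dominated_convergence
    (bound := fun u => Real.exp (-(s*u)))
  · filter_upwards with x
    apply Measurable.aestronglyMeasurable
    fun_prop
  · filter_upwards [eventually_ge_atTop (1:ℝ)] with x hx
    rw [ae_restrict_iff' measurableSet_Ici]
    filter_upwards with u hu
    simp only [mem_Ici] at hu
    have hxu : 0 < x + u := by linarith
    have hr0 : 0 ≤ x / (x + u) := by positivity
    have hr1 : x / (x + u) ≤ 1 := by
      rw [div_le_one hxu]; linarith
    rw [norm_mul, norm_of_nonneg (Real.exp_pos _).le, norm_of_nonneg hr0]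
    nlinarith [Real.exp_pos (-(s*u))]
  · exact xmu_base_int s hs
  · rw [ae_restrict_iff' measurableSet_Ici]
    filter_upwards with u hu
    simp only [mem_Ici] at hu
    have h1 : Tendsto (fun x : ℝ => x + u) atTop atTop :=
      tendsto_atTop_add_const_right _ u tendsto_id
    have h2 : Tendsto (fun x : ℝ => u / (x + u)) atTop (𝓝 0) :=
      Tendsto.div_atTop tendsto_const_nhds h1
    have h3 : Tendsto (fun x : ℝ => 1 - u / (x + u)) atTop (𝓝 (1 - 0)) :=
      tendsto_const_nhds.sub h2
    rw [sub_zero] at h3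
    have h4 : Tendsto (fun x : ℝ => Real.exp (-(s*u)) * (1 - u / (x + u))) atTop
        (𝓝 (Real.exp (-(s*u)))) := by simpa using h3.const_mul (Real.exp (-(s*u)))
    refine h4.congr' ?_
    filter_upwards [eventually_ge_atTop (1:ℝ)] with x hx
    have hx0 : 0 < x + u := by linarith
    congr 1
    field_simp
    ring

private lemma xmu_tend2 (s : ℝ) (hs : 0 < s) :
    Tendsto (fun x : ℝ => ∫ u in Ici (0:ℝ),
        (Icc (0:ℝ) (x-1)).indicator (fun u => Real.exp (-(s*u)) * (x/(x-u))) u)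
      atTop (𝓝 (1/s)) := by
  rw [← xmu_base_val s hs]
  apply tendsto_integral_filter_of_dominated_convergence
    (bound := fun u => (1 + 2/s) * Real.exp (-(s/2) * u))
  · filter_upwards with x
    apply Measurable.aestronglyMeasurable
    apply Measurable.indicator ?_ measurableSet_Icc
    fun_prop
  · filter_upwards [eventually_ge_atTop (1:ℝ)] with x hx
    filter_upwards with u
    by_cases hmem : u ∈ Icc (0:ℝ) (x-1)
    · rw [indicator_of_mem hmem]
      obtain ⟨hu0, hu1⟩ := hmem
      have hxu : (1:ℝ) ≤ x - u := by linarith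
      have hxu0 : (0:ℝ) < x - u := by linarith
      have hr0 : 0 ≤ x / (x - u) := by positivity
      have hr1 : x / (x - u) ≤ 1 + u := by
        rw [div_le_iff₀ hxu0]; nlinarith
      rw [norm_mul, norm_of_nonneg (Real.exp_pos _).le, norm_of_nonneg hr0]
      have key : Real.exp (-(s*u)) * (1 + u) ≤ (1 + 2/s) * Real.exp (-(s/2) * u) := by
        have he : Real.exp (-(s*u)) = Real.exp (-(s/2)*u) * Real.exp (-(s/2)*u) := by
          rw [← Real.exp_add]; ring_nf
        rw [he]
        have h1 : Real.exp (-(s/2)*u) * (1 + u) ≤ 1 + 2/s := by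
          have hte := xmu_te_le_one ((s/2)*u)
          rw [show -(s/2*u) = -(s/2)*u by ring] at hte
          have hle1 : Real.exp (-(s/2)*u) ≤ 1 := by
            rw [Real.exp_le_one_iff]; nlinarith
          have h2 : Real.exp (-(s/2)*u) * u ≤ 2/s := by
            rw [le_div_iff₀ hs]
            nlinarith
          nlinarith
        calc Real.exp (-(s/2)*u) * Real.exp (-(s/2)*u) * (1 + u)
            = Real.exp (-(s/2)*u) * (Real.exp (-(s/2)*u) * (1 + u)) := by ring
          _ ≤ Real.exp (-(s/2)*u) * (1 + 2/s) :=
              mul_le_mul_of_nonneg_left h1 (Real.exp_pos _).le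
          _ = (1 + 2/s) * Real.exp (-(s/2)*u) := by ring
      calc Real.exp (-(s*u)) * (x/(x-u)) ≤ Real.exp (-(s*u)) * (1 + u) := by
            nlinarith [Real.exp_pos (-(s*u))]
        _ ≤ _ := key
    · rw [indicator_of_notMem hmem]
      simp only [norm_zero]
      positivity
  · have hI : IntegrableOn (fun u => Real.exp (-(s/2)*u)) (Ici (0:ℝ)) := by
      rw [integrableOn_Ici_iff_integrableOn_Ioi]
      exact exp_neg_integrableOn_Ioi 0 (by positivity)
    exact hI.const_mul _
  · rw [ae_restrict_iff' measurableSet_Ici]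
    filter_upwards with u hu
    simp only [mem_Ici] at hu
    have h1 : Tendsto (fun x : ℝ => x - u) atTop atTop :=
      tendsto_atTop_add_const_right _ (-u) tendsto_id
    have h2 : Tendsto (fun x : ℝ => u / (x - u)) atTop (𝓝 0) :=
      Tendsto.div_atTop tendsto_const_nhds h1
    have h3 : Tendsto (fun x : ℝ => 1 + u / (x - u)) atTop (𝓝 (1 + 0)) :=
      tendsto_const_nhds.add h2
    rw [add_zero] at h3
    have h4 : Tendsto (fun x : ℝ => Real.exp (-(s*u)) * (1 + u / (x - u))) atTop
        (𝓝 (Real.exp (-(s*u)))) := by simpa using h3.const_mul (Real.exp (-(s*u)))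
    refine h4.congr' ?_
    filter_upwards [eventually_ge_atTop (u+1)] with x hx
    have hmem : u ∈ Icc (0:ℝ) (x-1) := ⟨hu, by linarith⟩
    rw [indicator_of_mem hmem]
    have hxu0 : (0:ℝ) < x - u := by linarith
    congr 1
    field_simp
    ring

/-- For `u₂` given by the variation-of-constants formula for `λ u - u'' = 1/x` on `[1, ∞)`,
`x * u₂ x → 1/λ` as `x → ∞`. -/
theorem x_mul_u2_tendsto (lam : ℝ) (hlam : 0 < lam) (c : ℝ)
    (u₂ : ℝ → ℝ)
    (hu₂ : ∀ x ≥ 1, u₂ x =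
        (1 / (2 * Real.sqrt lam)) * (∫ t in Ici x, Real.exp (Real.sqrt lam * (x - t)) / t)
      + (1 / (2 * Real.sqrt lam)) * (∫ t in Icc 1 x, Real.exp (-(Real.sqrt lam * (x - t))) / t)
      + c * Real.exp (-(Real.sqrt lam * x))) :
    Tendsto (fun x => x * u₂ x) atTop (nhds (1 / lam)) := by
  set s := Real.sqrt lam with hsdef
  have hs : 0 < s := Real.sqrt_pos.mpr hlam
  have hs2 : s * s = lam := Real.mul_self_sqrt hlam.le
  -- third term
  have hexp : Tendsto (fun x : ℝ => x * Real.exp (-(s*x))) atTop (𝓝 0) := by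
    have h := tendsto_pow_mul_exp_neg_atTop_nhds_zero 1
    have hsx : Tendsto (fun x : ℝ => s * x) atTop atTop :=
      tendsto_id.const_mul_atTop hs
    have h2 := (h.comp hsx).const_mul (1/s)
    rw [mul_zero] at h2
    refine h2.congr fun x => ?_
    simp only [Function.comp_apply, pow_one]
    field_simp
  -- combination
  have hcomb : Tendsto (fun x : ℝ =>
      (1/(2*s)) * (∫ u in Ici (0:ℝ), Real.exp (-(s*u)) * (x/(x+u)))
      + (1/(2*s)) * (∫ u in Ici (0:ℝ),
          (Icc (0:ℝ) (x-1)).indicator (fun u => Real.exp (-(s*u)) * (x/(x-u))) u)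
      + c * (x * Real.exp (-(s*x)))) atTop
      (𝓝 ((1/(2*s)) * (1/s) + (1/(2*s)) * (1/s) + c * 0)) :=
    (((xmu_tend1 s hs).const_mul _).add ((xmu_tend2 s hs).const_mul _)).add
      (hexp.const_mul c)
  have hval : (1/(2*s)) * (1/s) + (1/(2*s)) * (1/s) + c * 0 = 1 / lam := by
    rw [← hs2]
    field_simp
    ring
  rw [hval] at hcomb
  refine hcomb.congr' ?_
  filter_upwards [eventually_ge_atTop (1:ℝ)] with x hx
  rw [hu₂ x hx]
  -- first integral
  have e1 : x * (∫ t in Ici x, Real.exp (s * (x - t)) / t)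
      = ∫ u in Ici (0:ℝ), Real.exp (-(s*u)) * (x/(x+u)) := by
    rw [xmu_shift x (fun t => Real.exp (s * (x - t)) / t), ← integral_const_mul]
    congr 1
    funext u
    rw [show s * (x - (u + x)) = -(s*u) by ring]
    ring
  -- second integral
  have e2 : x * (∫ t in Icc 1 x, Real.exp (-(s * (x - t))) / t)
      = ∫ u in Ici (0:ℝ),
          (Icc (0:ℝ) (x-1)).indicator (fun u => Real.exp (-(s*u)) * (x/(x-u))) u := by
    rw [setIntegral_indicator measurableSet_Icc,
      inter_eq_right.mpr (Icc_subset_Ici_self : Icc (0:ℝ) (x-1) ⊆ Ici 0),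
      xmu_reflect x (fun t => Real.exp (-(s * (x - t))) / t), ← integral_const_mul]
    congr 1
    funext u
    rw [show -(s * (x - (x - u))) = -(s*u) by ring]
    ring
  linear_combination (-(1/(2*s))) * e1 + (-(1/(2*s))) * e2
end

section
/- Let d, m be natural numbers, p in [1, infinity), and let V : R^d -> R^{m x m} be measurable with <V(x) xi, xi> <= 0 for almost every x in R^d and all xi in R^m. Let f : R^d -> C^m be measurable with both f and the pointwise matrix-vector product V f in L^p(R^d; C^m). Then for every lambda > 0 one has the dissipativity estimate ||lambda f - V f||_{L^p} >= lambda ||f||_{L^p}. -/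
open MeasureTheory Matrix ENNReal

lemma key_re (m : ℕ) (V : Matrix (Fin m) (Fin m) ℝ)
    (hV : ∀ ξ : Fin m → ℝ, V.mulVec ξ ⬝ᵥ ξ ≤ 0)
    (z : EuclideanSpace ℂ (Fin m)) :
    (inner ℂ z ((WithLp.equiv 2 (Fin m → ℂ)).symm
      ((V.map (Complex.ofReal ·)).mulVec (WithLp.equiv 2 (Fin m → ℂ) z))) : ℂ).re ≤ 0 := by
  set a : Fin m → ℝ := fun k => (z k).re
  set b : Fin m → ℝ := fun k => (z k).im
  have : (inner ℂ z ((WithLp.equiv 2 (Fin m → ℂ)).symm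
      ((V.map (Complex.ofReal ·)).mulVec (WithLp.equiv 2 (Fin m → ℂ) z))) : ℂ).re
      = V.mulVec a ⬝ᵥ a + V.mulVec b ⬝ᵥ b := by
    simp only [PiLp.inner_apply, RCLike.inner_apply, Matrix.mulVec, dotProduct,
      Matrix.map_apply, WithLp.equiv_symm_apply, WithLp.equiv_apply, PiLp.toLp_apply,
      Complex.re_sum, Complex.mul_re, Complex.conj_re, Complex.conj_im,
      Finset.mul_sum, Finset.sum_mul, Complex.re_sum, Complex.ofReal_re, Complex.ofReal_im]
    rw [← Finset.sum_add_distrib]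
    congr 1; ext k
    rw [← Finset.sum_add_distrib]
    congr 1; ext l
    simp [Complex.mul_re, Complex.mul_im, a, b]
  rw [this]
  have := hV a; have := hV b; linarith

lemma key_norm (m : ℕ) (V : Matrix (Fin m) (Fin m) ℝ)
    (hV : ∀ ξ : Fin m → ℝ, V.mulVec ξ ⬝ᵥ ξ ≤ 0)
    (z : EuclideanSpace ℂ (Fin m)) (lam : ℝ) (hlam : 0 ≤ lam) :
    lam * ‖z‖ ≤ ‖lam • z - (WithLp.equiv 2 (Fin m → ℂ)).symm
      ((V.map (Complex.ofReal ·)).mulVec (WithLp.equiv 2 (Fin m → ℂ) z))‖ := by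
  set w := (WithLp.equiv 2 (Fin m → ℂ)).symm
      ((V.map (Complex.ofReal ·)).mulVec (WithLp.equiv 2 (Fin m → ℂ) z)) with hw
  have hre : (inner ℂ z w : ℂ).re ≤ 0 := key_re m V hV z
  have hsq : (lam * ‖z‖) ^ 2 ≤ ‖lam • z - w‖ ^ 2 := by
    have := @norm_sub_sq ℂ _ _ _ _ (lam • z) w
    simp only [RCLike.re_to_complex] at this
    have hin : (inner ℂ (lam • z) w : ℂ).re = lam * (inner ℂ z w : ℂ).re := by
      rw [show (lam • z) = ((lam : ℂ) • z) by norm_cast, inner_smul_left]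
      simp [Complex.mul_re]
    have hnz : ‖lam • z‖ = lam * ‖z‖ := by
      rw [norm_smul, Real.norm_eq_abs, abs_of_nonneg hlam]
    rw [hin, hnz] at this
    nlinarith [sq_nonneg ‖w‖, mul_nonneg hlam (neg_nonneg.2 hre)]
  have h1 : 0 ≤ lam * ‖z‖ := mul_nonneg hlam (norm_nonneg _)
  nlinarith [norm_nonneg (lam • z - w)]

/-- Dissipativity of the multiplication operator `f ↦ V f` in `L^p(ℝ^d; ℂ^m)`:
if `⟨V(x)ξ, ξ⟩ ≤ 0` a.e., then `‖λ f - V f‖_p ≥ λ ‖f‖_p` for all `λ > 0`. -/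
theorem multiplication_operator_dissipative (d m : ℕ) (p : ℝ≥0∞) (hp1 : 1 ≤ p) (hp2 : p ≠ ⊤)
    (V : (Fin d → ℝ) → Matrix (Fin m) (Fin m) ℝ)
    (hVmeas : ∀ k l, Measurable fun x => V x k l)
    (hdiss : ∀ᵐ x ∂(volume : Measure (Fin d → ℝ)),
      ∀ ξ : Fin m → ℝ, (V x).mulVec ξ ⬝ᵥ ξ ≤ 0)
    (f : (Fin d → ℝ) → EuclideanSpace ℂ (Fin m)) (hf : MeasureTheory.StronglyMeasurable f)
    (hfLp : MemLp f p volume)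
    (Vf : (Fin d → ℝ) → EuclideanSpace ℂ (Fin m))
    (hVf : ∀ x, Vf x = (WithLp.equiv 2 (Fin m → ℂ)).symm
      (((V x).map (Complex.ofReal ·)).mulVec (WithLp.equiv 2 (Fin m → ℂ) (f x))))
    (hVfLp : MemLp Vf p volume)
    (lam : ℝ) (hlam : 0 < lam) :
    ENNReal.ofReal lam * eLpNorm f p volume
      ≤ eLpNorm (fun x => lam • f x - Vf x) p volume := by
  have hmono : eLpNorm (fun x => lam • f x) p volume
      ≤ eLpNorm (fun x => lam • f x - Vf x) p volume := by
    apply eLpNorm_mono_ae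
    filter_upwards [hdiss] with x hx
    rw [norm_smul, Real.norm_eq_abs, abs_of_nonneg hlam.le, hVf x]
    exact key_norm m (V x) hx (f x) lam hlam.le
  calc ENNReal.ofReal lam * eLpNorm f p volume
      = eLpNorm (fun x => lam • f x) p volume := by
        rw [show (fun x => lam • f x) = lam • f from rfl, eLpNorm_const_smul]
        congr 1
        rw [← ofReal_norm, Real.norm_eq_abs, abs_of_nonneg hlam.le]
    _ ≤ _ := hmono
end

section
/- Let d, m be natural numbers, let Q = (q_{ij}) : R^d -> R^{d x d} be a matrix-valued function with C^1 entries whose values are symmetric positive semidefinite matrices, and let u = (u_1, ..., u_m) : R^d -> R^m be C^2. Then at every point x in R^d one has sum_{k=1}^m div(Q grad u_k)(x) * u_k(x) <= (1/2) div(Q grad |u|^2)(x), where div(Q grad v) denotes sum_{i,j=1}^d D_i( q_{ij} D_j v ) and |u|^2 = sum_{k=1}^m u_k^2. -/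
/-- The partial derivative in the `i`-th coordinate direction of `ℝ^d`. -/
noncomputable def pd {d : ℕ} (i : Fin d) (f : (Fin d → ℝ) → ℝ) (x : Fin d → ℝ) : ℝ :=
  fderiv ℝ f x (Pi.single i 1)

/-- `div (Q ∇ f) = ∑ i j, D_i (q_{ij} D_j f)`. -/
noncomputable def divQgrad {d : ℕ} (q : Fin d → Fin d → (Fin d → ℝ) → ℝ)
    (f : (Fin d → ℝ) → ℝ) (x : Fin d → ℝ) : ℝ :=
  ∑ i, ∑ j, pd i (fun y => q i j y * pd j f y) x

lemma pd_mul' {d : ℕ} {f g : (Fin d → ℝ) → ℝ} {x : Fin d → ℝ}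
    (hf : DifferentiableAt ℝ f x) (hg : DifferentiableAt ℝ g x) (i : Fin d) :
    pd i (fun y => f y * g y) x = pd i f x * g x + f x * pd i g x := by
  unfold pd
  rw [fderiv_fun_mul hf hg]
  simp only [ContinuousLinearMap.add_apply, ContinuousLinearMap.smul_apply, smul_eq_mul]
  ring

lemma pd_sum' {d n : ℕ} {f : Fin n → (Fin d → ℝ) → ℝ} {x : Fin d → ℝ}
    (hf : ∀ k, DifferentiableAt ℝ (f k) x) (i : Fin d) :
    pd i (fun y => ∑ k, f k y) x = ∑ k, pd i (f k) x := by
  unfold pd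
  rw [fderiv_fun_sum (fun k _ => hf k)]
  simp

lemma pd_const_mul' {d : ℕ} {f : (Fin d → ℝ) → ℝ} {x : Fin d → ℝ} (c : ℝ)
    (hf : DifferentiableAt ℝ f x) (i : Fin d) :
    pd i (fun y => c * f y) x = c * pd i f x := by
  unfold pd
  rw [fderiv_const_mul hf c]
  simp

lemma contDiff_pd' {d : ℕ} {f : (Fin d → ℝ) → ℝ} (hf : ContDiff ℝ 2 f) (j : Fin d) :
    ContDiff ℝ 1 (fun y => pd j f y) :=
  (hf.fderiv_right (by norm_num)).clm_apply contDiff_const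

/-- For `Q` symmetric positive semidefinite with `C¹` entries and `u : ℝ^d → ℝ^m` of class
`C²`, one has `∑ₖ div(Q ∇ uₖ) uₖ ≤ (1/2) div(Q ∇ |u|²)` pointwise. -/
theorem divQgrad_dot_le_half_divQgrad_sq (d m : ℕ)
    (q : Fin d → Fin d → (Fin d → ℝ) → ℝ) (hq : ∀ i j, ContDiff ℝ 1 (q i j))
    (hsymm : ∀ i j x, q i j x = q j i x)
    (hpsd : ∀ (x : Fin d → ℝ) (ξ : Fin d → ℝ), 0 ≤ ∑ i, ∑ j, ξ i * q i j x * ξ j)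
    (u : Fin m → (Fin d → ℝ) → ℝ) (hu : ∀ k, ContDiff ℝ 2 (u k))
    (x : Fin d → ℝ) :
    ∑ k, divQgrad q (u k) x * u k x
      ≤ (1 / 2) * divQgrad q (fun z => ∑ k, u k z ^ 2) x := by
  have hud : ∀ k, Differentiable ℝ (u k) := fun k => (hu k).differentiable (by norm_num)
  have hpdd : ∀ k j, Differentiable ℝ (fun y => pd j (u k) y) :=
    fun k j => (contDiff_pd' (hu k) j).differentiable (by norm_num)
  have hqd : ∀ i j, Differentiable ℝ (q i j) := fun i j => (hq i j).differentiable (by norm_num)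
  -- derivative of the sum of squares
  have hsq : ∀ (j : Fin d) (y : Fin d → ℝ),
      pd j (fun z => ∑ k, u k z ^ 2) y = ∑ k, 2 * (u k y * pd j (u k) y) := by
    intro j y
    have : (fun z => ∑ k, u k z ^ 2) = fun z => ∑ k, u k z * u k z := by
      funext z; simp [sq]
    rw [this, pd_sum' (fun k => ((hud k) y).fun_mul ((hud k) y))]
    refine Finset.sum_congr rfl fun k _ => ?_
    rw [pd_mul' ((hud k) y) ((hud k) y)]
    ring
  -- rewrite each term of divQgrad of the square
  have key : ∀ i j : Fin d,
      pd i (fun y => q i j y * pd j (fun z => ∑ k, u k z ^ 2) y) x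
        = ∑ k, 2 * (pd i (q i j) x * (u k x * pd j (u k) x)
            + q i j x * (pd i (u k) x * pd j (u k) x + u k x * pd i (pd j (u k)) x)) := by
    intro i j
    have heq : (fun y => q i j y * pd j (fun z => ∑ k, u k z ^ 2) y)
        = fun y => ∑ k, 2 * (q i j y * (u k y * pd j (u k) y)) := by
      funext y
      rw [hsq j y, Finset.mul_sum]
      refine Finset.sum_congr rfl fun k _ => ?_
      ring
    rw [heq]
    have hdk : ∀ (k : Fin m) (y : Fin d → ℝ),
        DifferentiableAt ℝ (fun y => q i j y * (u k y * pd j (u k) y)) y :=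
      fun k y => ((hqd i j) y).mul (((hud k) y).mul ((hpdd k j) y))
    rw [pd_sum' (fun k => ((hdk k x).const_mul 2)) i]
    refine Finset.sum_congr rfl fun k _ => ?_
    rw [pd_const_mul' 2 (hdk k x) i,
      pd_mul' ((hqd i j) x) (((hud k) x).fun_mul ((hpdd k j) x)) i,
      pd_mul' ((hud k) x) ((hpdd k j) x) i]
  -- expand divQgrad q (u k)
  have keyL : ∀ (k : Fin m) (i j : Fin d),
      pd i (fun y => q i j y * pd j (u k) y) x
        = pd i (q i j) x * pd j (u k) x + q i j x * pd i (pd j (u k)) x :=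
    fun k i j => pd_mul' ((hqd i j) x) ((hpdd k j) x) i
  have expand : (1 / 2) * divQgrad q (fun z => ∑ k, u k z ^ 2) x
      = ∑ k, divQgrad q (u k) x * u k x
        + ∑ k, ∑ i, ∑ j, q i j x * (pd i (u k) x * pd j (u k) x) := by
    unfold divQgrad
    simp only [key, keyL, Finset.mul_sum, Finset.sum_mul]
    have swap : ∀ (f : Fin d → Fin d → Fin m → ℝ),
        ∑ i, ∑ j, ∑ k, f i j k = ∑ k, ∑ i, ∑ j, f i j k := by
      intro f
      calc ∑ i, ∑ j, ∑ k, f i j k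
          = ∑ i, ∑ k, ∑ j, f i j k :=
            Finset.sum_congr rfl fun i _ => Finset.sum_comm ..
        _ = ∑ k, ∑ i, ∑ j, f i j k := Finset.sum_comm ..
    rw [swap (fun i j k => (1 / 2) * (2 * (pd i (q i j) x * (u k x * pd j (u k) x)
          + q i j x * (pd i (u k) x * pd j (u k) x + u k x * pd i (pd j (u k)) x))))]
    rw [← Finset.sum_add_distrib]
    refine Finset.sum_congr rfl fun k _ => ?_
    rw [← Finset.sum_add_distrib]
    refine Finset.sum_congr rfl fun i _ => ?_
    rw [← Finset.sum_add_distrib]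
    refine Finset.sum_congr rfl fun j _ => ?_
    ring
  rw [expand]
  have hnn : 0 ≤ ∑ k, ∑ i, ∑ j, q i j x * (pd i (u k) x * pd j (u k) x) := by
    refine Finset.sum_nonneg fun k _ => ?_
    have := hpsd x (fun i => pd i (u k) x)
    calc (0:ℝ) ≤ ∑ i, ∑ j, pd i (u k) x * q i j x * pd j (u k) x := this
      _ = ∑ i, ∑ j, q i j x * (pd i (u k) x * pd j (u k) x) := by
          refine Finset.sum_congr rfl fun i _ => Finset.sum_congr rfl fun j _ => ?_
          ring
  linarith
end
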